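/- Let b be a prime, m ≥ 1, and let P_n = (V_0,…,V_{b^m−1}) be the digital net in base b with generating matrices C_1,…,C_s ∈ F_b^{m×m}, each of which is nonsingular (equivalently, each one-dimensional projection of P_n is a (0,m,1)-net in base b). Then C_b(k;P_n) ≤ 1 for every k ∈ ℕ^s if and only if P_n is a (0,m,s)-net in base b, i.e., if and only if P_n is k-equidistributed in base b for every k ∈ ℕ^s with |k| ≤ m. (This is the combinatorial core of the paper's main theorem: a scrambled digital (t,m,s)-net is NLOD/NUOD if and only if t = 0.) -/

import Mathlib

/-- integer formed by the first `t` digits -/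
def Nval (b t : ℕ) (d : ℕ → ℕ) : ℕ := ∑ r ∈ Finset.range t, d r * b ^ (t - 1 - r)

/-- real number with digit expansion `d` (first `m` digits) -/
noncomputable def xval (b m : ℕ) (d : ℕ → ℕ) : ℝ :=
  ∑ r ∈ Finset.range m, (d r : ℝ) / (b : ℝ) ^ (r + 1)

lemma Nval_succ (b t : ℕ) (d : ℕ → ℕ) : Nval b (t+1) d = b * Nval b t d + d t := by
  unfold Nval
  rw [Finset.sum_range_succ, Finset.mul_sum]
  simp only [Nat.sub_self, Nat.succ_sub_one, pow_zero, mul_one]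
  congr 1
  apply Finset.sum_congr rfl
  intro r hr
  rw [Finset.mem_range] at hr
  have : t - r = (t - 1 - r) + 1 := by omega
  rw [this, pow_succ]; ring

lemma Nval_lt (b t : ℕ) (d : ℕ → ℕ) (hd : ∀ i, d i < b) : Nval b t d < b ^ t := by
  induction t with
  | zero => simp [Nval]
  | succ t ih =>
    rw [Nval_succ, pow_succ]
    have := hd t
    calc b * Nval b t d + d t < b * Nval b t d + b := by omega
    _ = b * (Nval b t d + 1) := by ring
    _ ≤ b * b ^ t := by
        exact Nat.mul_le_mul_left b (by omega)
    _ = b ^ t * b := by ring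

lemma Nval_inj (b t : ℕ) (hb : 2 ≤ b) (d e : ℕ → ℕ) (hd : ∀ i, d i < b) (he : ∀ i, e i < b) :
    Nval b t d = Nval b t e ↔ ∀ r < t, d r = e r := by
  induction t with
  | zero => simp [Nval]
  | succ t ih =>
    rw [Nval_succ, Nval_succ]
    constructor
    · intro h
      have h1 : d t = e t := by
        have := congrArg (· % b) h
        simpa [Nat.mul_add_mod, Nat.mod_eq_of_lt (hd t), Nat.mod_eq_of_lt (he t)] using this
      have h2 : Nval b t d = Nval b t e := by
        have hb0 : 0 < b := by omega
        have : b * Nval b t d = b * Nval b t e := by omega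
        exact Nat.eq_of_mul_eq_mul_left hb0 this
      intro r hr
      rcases Nat.lt_succ_iff_lt_or_eq.mp hr with h' | h'
      · exact (ih.mp h2) r h'
      · subst h'; exact h1
    · intro h
      have h1 : d t = e t := h t (Nat.lt_succ_self t)
      have h2 : Nval b t d = Nval b t e := ih.mpr fun r hr => h r (hr.trans (Nat.lt_succ_self t))
      rw [h1, h2]

lemma digits_sum (b : ℕ) (hb : 2 ≤ b) (k a : ℕ) :
    ∑ t ∈ Finset.range k, (a / b ^ t % b) * b ^ t = a % b ^ k := by
  induction k generalizing a with
  | zero => simp [Nat.mod_one]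
  | succ k ih =>
    rw [Finset.sum_range_succ', pow_succ']
    simp only [pow_zero, Nat.div_one, mul_one]
    have : ∀ t, a / b ^ (t+1) % b * b ^ (t+1) = (a / b) / b ^ t % b * b ^ t * b := by
      intro t
      rw [pow_succ', Nat.div_div_eq_div_mul]
      ring
    simp only [this]
    rw [← Finset.sum_mul, ih (a / b)]
    have h1 : a / b % b ^ k = a % (b * b ^ k) / b := (Nat.mod_mul_right_div_self a b (b^k)).symm
    have h2 : a % b = a % (b * b ^ k) % b := (Nat.mod_mod_of_dvd a (Dvd.intro (b^k) rfl)).symm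
    rw [h1, h2, Nat.mul_comm (a % (b * b ^ k) / b) b, Nat.div_add_mod]

/-- digit expansion of a natural number `a < b^k`, listed most-significant first -/
lemma Nval_digits (b : ℕ) (hb : 2 ≤ b) (k a : ℕ) (ha : a < b ^ k) :
    Nval b k (fun t => a / b ^ (k - 1 - t) % b) = a := by
  unfold Nval
  have : ∀ r ∈ Finset.range k, a / b ^ (k-1-r) % b * b ^ (k-1-r)
      = (fun t => a / b ^ t % b * b ^ t) (k-1-r) := fun r _ => rfl
  rw [Finset.sum_congr rfl this, Finset.sum_range_reflect (fun t => a / b ^ t % b * b ^ t) k,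
    digits_sum b hb k a, Nat.mod_eq_of_lt ha]

lemma tail_bound (b : ℕ) (hb : 2 ≤ b) (d : ℕ → ℕ) (hd : ∀ i, d i < b) :
    ∀ m t, t ≤ m → ∑ r ∈ Finset.Ico t m, (d r : ℝ) / (b : ℝ) ^ (r + 1)
      ≤ ((b : ℝ) ^ t)⁻¹ - ((b : ℝ) ^ m)⁻¹ := by
  have hb0 : (0:ℝ) < b := by positivity
  intro m
  induction m with
  | zero => intro t ht; interval_cases t; simp
  | succ m ih =>
    intro t ht
    rcases Nat.lt_or_ge t (m+1) with h | h
    · have htm : t ≤ m := by omega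
      rw [Finset.sum_Ico_succ_top htm]
      have h1 := ih t htm
      have h2 : (d m : ℝ) / (b : ℝ) ^ (m+1) ≤ ((b:ℝ) - 1) / (b:ℝ)^(m+1) := by
        apply div_le_div_of_nonneg_right ?_ (by positivity)
        have := hd m
        have : (d m : ℝ) + 1 ≤ (b : ℝ) := by exact_mod_cast this
        linarith
      have h3 : ((b:ℝ) - 1) / (b:ℝ)^(m+1) = ((b:ℝ)^m)⁻¹ - ((b:ℝ)^(m+1))⁻¹ := by
        rw [sub_div, pow_succ]
        field_simp
      linarith
    · have : t = m + 1 := by omega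
      subst this
      simp

lemma xval_nonneg (b m : ℕ) (d : ℕ → ℕ) : 0 ≤ xval b m d := by
  unfold xval; positivity

lemma pow_mul_xval (b : ℕ) (hb : 2 ≤ b) (d : ℕ → ℕ) (m t : ℕ) (ht : t ≤ m) :
    (b:ℝ) ^ t * xval b m d
      = (Nval b t d : ℝ) + (b:ℝ) ^ t * ∑ r ∈ Finset.Ico t m, (d r : ℝ) / (b : ℝ) ^ (r + 1) := by
  have hb0 : (0:ℝ) < b := by positivity
  unfold xval
  rw [Finset.range_eq_Ico, ← Finset.sum_Ico_consecutive _ (Nat.zero_le t) ht, mul_add]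
  congr 1
  rw [← Finset.range_eq_Ico, Finset.mul_sum]
  unfold Nval
  push_cast
  apply Finset.sum_congr rfl
  intro r hr
  rw [Finset.mem_range] at hr
  have hpow : (b:ℝ) ^ (t - 1 - r) * (b:ℝ) ^ (r + 1) = (b:ℝ) ^ t := by
    rw [← pow_add]; congr 1; omega
  field_simp
  rw [mul_comm ((b:ℝ)^t) (d r : ℝ), ← hpow]
  ring

lemma pow_m_mul_xval (b : ℕ) (hb : 2 ≤ b) (d : ℕ → ℕ) (m : ℕ) :
    (b:ℝ) ^ m * xval b m d = (Nval b m d : ℝ) := by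
  have := pow_mul_xval b hb d m m le_rfl
  simpa using this

lemma floor_pow_mul_xval (b : ℕ) (hb : 2 ≤ b) (d : ℕ → ℕ) (hd : ∀ i, d i < b)
    (m t : ℕ) (ht : t ≤ m) : ⌊(b:ℝ) ^ t * xval b m d⌋ = (Nval b t d : ℤ) := by
  have hb0 : (0:ℝ) < b := by positivity
  rw [pow_mul_xval b hb d m t ht]
  have h1 : 0 ≤ (b:ℝ) ^ t * ∑ r ∈ Finset.Ico t m, (d r : ℝ) / (b : ℝ) ^ (r + 1) := by
    positivity
  have h2 : (b:ℝ) ^ t * ∑ r ∈ Finset.Ico t m, (d r : ℝ) / (b : ℝ) ^ (r + 1) < 1 := by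
    have := tail_bound b hb d hd m t ht
    have h3 : (b:ℝ)^t * (((b : ℝ) ^ t)⁻¹ - ((b : ℝ) ^ m)⁻¹) < 1 := by
      rw [mul_sub, mul_inv_cancel₀ (by positivity)]
      have : 0 < (b:ℝ)^t * ((b:ℝ)^m)⁻¹ := by positivity
      linarith
    calc (b:ℝ) ^ t * ∑ r ∈ Finset.Ico t m, (d r : ℝ) / (b : ℝ) ^ (r + 1)
        ≤ (b:ℝ)^t * (((b : ℝ) ^ t)⁻¹ - ((b : ℝ) ^ m)⁻¹) := by
          apply mul_le_mul_of_nonneg_left this (by positivity)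
      _ < 1 := h3
  rw [Int.floor_eq_iff]
  push_cast
  constructor <;> linarith

lemma xval_lt_one (b : ℕ) (hb : 2 ≤ b) (d : ℕ → ℕ) (hd : ∀ i, d i < b) (m : ℕ) :
    xval b m d < 1 := by
  have := floor_pow_mul_xval b hb d hd m 0 (Nat.zero_le m)
  simp only [pow_zero, one_mul, Nval] at this
  simp only [Finset.range_zero, Finset.sum_empty, Nat.cast_zero] at this
  have h := Int.floor_eq_zero_iff.mp (by exact_mod_cast this)
  exact h.2

lemma floor_pow_mul_xval_ge (b : ℕ) (hb : 2 ≤ b) (d : ℕ → ℕ) (m t : ℕ) (ht : m ≤ t) :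
    ⌊(b:ℝ) ^ t * xval b m d⌋ = ((b ^ (t - m) * Nval b m d : ℕ) : ℤ) := by
  have : (b:ℝ) ^ t * xval b m d = ((b ^ (t - m) * Nval b m d : ℕ) : ℝ) := by
    have h1 : (b:ℝ) ^ t = (b:ℝ) ^ (t - m) * (b:ℝ) ^ m := by
      rw [← pow_add]; congr 1; omega
    rw [h1, mul_assoc, pow_m_mul_xval b hb d m]
    push_cast; ring
  rw [this, Int.floor_natCast]

/-- agreement of floors at level `i` is agreement of the first `min i m` digits -/
lemma floor_agree_iff (b : ℕ) (hb : 2 ≤ b) (d e : ℕ → ℕ) (hd : ∀ i, d i < b)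
    (he : ∀ i, e i < b) (m i : ℕ) :
    ⌊(b:ℝ) ^ i * xval b m d⌋ = ⌊(b:ℝ) ^ i * xval b m e⌋ ↔
      ∀ t < min i m, d t = e t := by
  rcases Nat.le_total i m with h | h
  · rw [floor_pow_mul_xval b hb d hd m i h, floor_pow_mul_xval b hb e he m i h,
      Nat.min_eq_left h]
    exact_mod_cast Nval_inj b i hb d e hd he
  · rw [floor_pow_mul_xval_ge b hb d m i h, floor_pow_mul_xval_ge b hb e m i h,
      Nat.min_eq_right h]
    have hbp : 0 < b ^ (i - m) := Nat.pow_pos (by omega)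
    constructor
    · intro hyp
      have : b ^ (i - m) * Nval b m d = b ^ (i - m) * Nval b m e := by exact_mod_cast hyp
      exact (Nval_inj b m hb d e hd he).mp (Nat.eq_of_mul_eq_mul_left hbp this)
    · intro hyp
      have := (Nval_inj b m hb d e hd he).mpr hyp
      rw [this]

lemma xval_inj (b : ℕ) (hb : 2 ≤ b) (d e : ℕ → ℕ) (hd : ∀ i, d i < b)
    (he : ∀ i, e i < b) (m : ℕ) (h : xval b m d = xval b m e) : ∀ t < m, d t = e t := by
  have h1 : (Nval b m d : ℝ) = (Nval b m e : ℝ) := by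
    rw [← pow_m_mul_xval b hb d m, ← pow_m_mul_xval b hb e m, h]
  exact (Nval_inj b m hb d e hd he).mp (by exact_mod_cast h1)

open MeasureTheory
open scoped Classical

noncomputable def gammaB (b : ℕ) (x y : ℝ) : ℕ∞ :=
  if x = y then ⊤
  else (↑(sInf {i : ℕ | ⌊(b : ℝ) ^ i * x⌋ = ⌊(b : ℝ) ^ i * y⌋ ∧
      ⌊(b : ℝ) ^ (i + 1) * x⌋ ≠ ⌊(b : ℝ) ^ (i + 1) * y⌋}) : ℕ∞)

noncomputable def mB {n s : ℕ} (b : ℕ) (P : Fin n → Fin s → ℝ) (k : Fin s → ℕ) (l : Fin n) : ℕ :=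
  (Finset.univ.filter fun j : Fin n =>
    j ≠ l ∧ ∀ r : Fin s, (k r : ℕ∞) ≤ gammaB b (P l r) (P j r)).card

noncomputable def nB {n s : ℕ} (b : ℕ) (P : Fin n → Fin s → ℝ) (i : Fin s → ℕ) (l : Fin n) : ℕ :=
  (Finset.univ.filter fun j : Fin n =>
    j ≠ l ∧ ∀ r : Fin s, gammaB b (P l r) (P j r) = (i r : ℕ∞)).card

noncomputable def MB {n s : ℕ} (b : ℕ) (P : Fin n → Fin s → ℝ) (k : Fin s → ℕ) : ℕ :=
  ∑ l : Fin n, mB b P k l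

noncomputable def NB {n s : ℕ} (b : ℕ) (P : Fin n → Fin s → ℝ) (i : Fin s → ℕ) : ℕ :=
  ∑ l : Fin n, nB b P i l

noncomputable def CB {n s : ℕ} (b : ℕ) (P : Fin n → Fin s → ℝ) (k : Fin s → ℕ) : ℝ :=
  (b : ℝ) ^ (∑ j, k j) * (MB b P k : ℝ) / ((n : ℝ) * ((n : ℝ) - 1))

def ElemInterval (b s : ℕ) (k a : Fin s → ℕ) : Set (Fin s → ℝ) :=
  {x | ∀ j : Fin s, (a j : ℝ) / (b : ℝ) ^ k j ≤ x j ∧ x j < ((a j : ℝ) + 1) / (b : ℝ) ^ k j}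

def kEquidistributed (b m : ℕ) {n s : ℕ} (P : Fin n → Fin s → ℝ) (k : Fin s → ℕ) : Prop :=
  ∀ a : Fin s → ℕ, (∀ j, a j < b ^ k j) →
    (Finset.univ.filter fun i : Fin n => P i ∈ ElemInterval b s k a).card = b ^ (m - ∑ j, k j)

noncomputable def digitalNet (b m s : ℕ) (C : Fin s → Matrix (Fin m) (Fin m) (ZMod b)) :
    Fin (b ^ m) → Fin s → ℝ :=
  fun i ℓ => ∑ r : Fin m,
    ((((C ℓ).mulVec fun p : Fin m => ((((i : ℕ) / b ^ (p : ℕ)) % b : ℕ) : ZMod b)) r).val : ℝ) /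
      (b : ℝ) ^ ((r : ℕ) + 1)

noncomputable def stackRank (b m s : ℕ) (C : Fin s → Matrix (Fin m) (Fin m) (ZMod b))
    (k : Fin s → ℕ) (hk : ∀ j, k j ≤ m) : ℕ :=
  (Matrix.of fun (x : (j : Fin s) × Fin (k j)) (p : Fin m) =>
    C x.1 ⟨(x.2 : ℕ), lt_of_lt_of_le x.2.2 (hk x.1)⟩ p).rank


lemma gammaB_le_iff (b : ℕ) (hb : 2 ≤ b) (d e : ℕ → ℕ) (hd : ∀ i, d i < b)
    (he : ∀ i, e i < b) (m : ℕ) (hm : 1 ≤ m) (k : ℕ) :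
    ((k : ℕ∞) ≤ gammaB b (xval b m d) (xval b m e)) ↔
      ⌊(b:ℝ) ^ k * xval b m d⌋ = ⌊(b:ℝ) ^ k * xval b m e⌋ := by
  unfold gammaB
  by_cases hxy : xval b m d = xval b m e
  · simp [hxy]
  · rw [if_neg hxy, Nat.cast_le]
    set A : ℕ → Prop := fun i => ⌊(b:ℝ) ^ i * xval b m d⌋ = ⌊(b:ℝ) ^ i * xval b m e⌋ with hA
    have hAiff : ∀ i, A i ↔ ∀ t < min i m, d t = e t := fun i =>
      floor_agree_iff b hb d e hd he m i
    have hdc : ∀ i j, j ≤ i → A i → A j := by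
      intro i j hji hi
      rw [hAiff] at hi ⊢
      intro t ht
      exact hi t (by omega)
    have hA0 : A 0 := by rw [hAiff]; intro t ht; omega
    have hAm : ¬ A m := by
      rw [hAiff]
      intro hyp
      exact hxy (by
        unfold xval
        apply Finset.sum_congr rfl
        intro r hr
        rw [Finset.mem_range] at hr
        rw [hyp r (by omega)])
    set T : Set ℕ := {i | ¬ A i} with hT
    have hTne : T.Nonempty := ⟨m, hAm⟩
    set h : ℕ := sInf T with hh
    have hhT : h ∈ T := Nat.sInf_mem hTne
    have hh1 : 1 ≤ h := by
      rcases Nat.eq_zero_or_pos h with h0 | h0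
      · exact absurd (h0 ▸ hhT) (by simpa [hT] using hA0)
      · exact h0
    have hAh1 : A (h - 1) := by
      by_contra hc
      have : h ≤ h - 1 := Nat.sInf_le hc
      omega
    have hmem : (h - 1) ∈ {i : ℕ | ⌊(b : ℝ) ^ i * xval b m d⌋ = ⌊(b : ℝ) ^ i * xval b m e⌋ ∧
        ⌊(b : ℝ) ^ (i + 1) * xval b m d⌋ ≠ ⌊(b : ℝ) ^ (i + 1) * xval b m e⌋} := by
      constructor
      · exact hAh1
      · have : h - 1 + 1 = h := by omega
        rw [this]
        exact hhT
    have hinf : sInf {i : ℕ | ⌊(b : ℝ) ^ i * xval b m d⌋ = ⌊(b : ℝ) ^ i * xval b m e⌋ ∧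
        ⌊(b : ℝ) ^ (i + 1) * xval b m d⌋ ≠ ⌊(b : ℝ) ^ (i + 1) * xval b m e⌋} = h - 1 := by
      apply le_antisymm (Nat.sInf_le hmem)
      apply le_csInf ⟨_, hmem⟩
      intro i hi
      have : h ≤ i + 1 := Nat.sInf_le hi.2
      have hAi : A i := hi.1
      -- i ≥ h - 1
      by_contra hc
      push_neg at hc
      omega
    rw [hinf]
    constructor
    · intro hk
      have : A k := hdc (h-1) k hk hAh1
      exact this
    · intro hAk
      by_contra hc
      push_neg at hc
      have : h ≤ k := by omega
      exact hhT (hdc k h this hAk)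

section Net

variable (b m s : ℕ) [Fact (Nat.Prime b)] (C : Fin s → Matrix (Fin m) (Fin m) (ZMod b))

lemma hb2 : 2 ≤ b := (Fact.out : Nat.Prime b).two_le

instance : NeZero b := ⟨(Fact.out : Nat.Prime b).pos.ne'⟩

/-- digit vector of an index -/
def Dmap (i : Fin (b ^ m)) : Fin m → ZMod b :=
  fun p => (((i : ℕ) / b ^ (p : ℕ) % b : ℕ) : ZMod b)

/-- digits of the ℓ-th coordinate of the i-th point, as an ℕ-valued function -/
noncomputable def coordDig (i : Fin (b ^ m)) (ℓ : Fin s) : ℕ → ℕ := fun t =>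
  if h : t < m then ((C ℓ).mulVec (Dmap b m i) ⟨t, h⟩).val else 0

lemma coordDig_lt (i : Fin (b ^ m)) (ℓ : Fin s) : ∀ t, coordDig b m s C i ℓ t < b := by
  intro t
  unfold coordDig
  split
  · exact ZMod.val_lt _
  · exact (Fact.out : Nat.Prime b).pos

lemma digitalNet_eq_xval (i : Fin (b ^ m)) (ℓ : Fin s) :
    digitalNet b m s C i ℓ = xval b m (coordDig b m s C i ℓ) := by
  unfold digitalNet xval coordDig
  rw [← Fin.sum_univ_eq_sum_range (fun t => ((if h : t < m then
      ((C ℓ).mulVec (Dmap b m i) ⟨t, h⟩).val else 0 : ℕ) : ℝ) / (b:ℝ) ^ (t+1)) m]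
  apply Finset.sum_congr rfl
  intro r _
  rw [dif_pos r.2]
  rfl

/-- the stacked linear map determined by `k` -/
def PhiF (k : Fin s → ℕ) (hk : ∀ j, k j ≤ m) :
    (Fin m → ZMod b) → ((j : Fin s) × Fin (k j)) → ZMod b :=
  fun x q => (C q.1).mulVec x ⟨(q.2 : ℕ), lt_of_lt_of_le q.2.2 (hk q.1)⟩

lemma PhiF_sub (k : Fin s → ℕ) (hk : ∀ j, k j ≤ m) (x y : Fin m → ZMod b) :
    PhiF b m s C k hk (x - y) = PhiF b m s C k hk x - PhiF b m s C k hk y := by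
  funext q
  simp [PhiF, Matrix.mulVec_sub]

lemma PhiF_add (k : Fin s → ℕ) (hk : ∀ j, k j ≤ m) (x y : Fin m → ZMod b) :
    PhiF b m s C k hk (x + y) = PhiF b m s C k hk x + PhiF b m s C k hk y := by
  funext q
  simp [PhiF, Matrix.mulVec_add]

/-- size of the kernel of the stacked map -/
noncomputable def cKer (k : Fin s → ℕ) (hk : ∀ j, k j ≤ m) : ℕ :=
  (Finset.univ.filter fun x : Fin m → ZMod b => PhiF b m s C k hk x = 0).card

lemma cKer_pos (k : Fin s → ℕ) (hk : ∀ j, k j ≤ m) : 1 ≤ cKer b m s C k hk := by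
  rw [Nat.one_le_iff_ne_zero]
  unfold cKer
  simp only [ne_eq, Finset.card_eq_zero, Finset.filter_eq_empty_iff, not_forall]
  refine ⟨0, Finset.mem_univ _, ?_⟩
  simp only [not_not]
  funext q
  simp [PhiF, Matrix.mulVec_zero]

lemma fiber_card (k : Fin s → ℕ) (hk : ∀ j, k j ≤ m) (w : ((j : Fin s) × Fin (k j)) → ZMod b)
    (x0 : Fin m → ZMod b) (hx0 : PhiF b m s C k hk x0 = w) :
    (Finset.univ.filter fun x : Fin m → ZMod b => PhiF b m s C k hk x = w).card
      = cKer b m s C k hk := by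
  unfold cKer
  apply Finset.card_bij' (fun x _ => x - x0) (fun y _ => y + x0)
  · intro x hx
    simp only [Finset.mem_filter, Finset.mem_univ, true_and] at hx ⊢
    rw [PhiF_sub, hx, hx0, sub_self]
  · intro y hy
    simp only [Finset.mem_filter, Finset.mem_univ, true_and] at hy ⊢
    rw [PhiF_add, hy, hx0, zero_add]
  · intro x _; simp
  · intro y _; simp

lemma card_decomp (k : Fin s → ℕ) (hk : ∀ j, k j ≤ m) :
    b ^ m = (Finset.univ.filter fun w : ((j : Fin s) × Fin (k j)) → ZMod b =>
        ∃ x, PhiF b m s C k hk x = w).card * cKer b m s C k hk := by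
  have h1 : (Finset.univ : Finset (Fin m → ZMod b)).card = b ^ m := by
    simp [Fintype.card_fun, ZMod.card]
  rw [← h1]
  rw [Finset.card_eq_sum_card_fiberwise
    (f := PhiF b m s C k hk) (t := Finset.univ) (fun x _ => Finset.mem_univ _)]
  rw [← Finset.sum_filter_add_sum_filter_not Finset.univ
    (fun w => ∃ x, PhiF b m s C k hk x = w)]
  have h2 : ∀ w ∈ Finset.univ.filter fun w : ((j : Fin s) × Fin (k j)) → ZMod b =>
      ¬ ∃ x, PhiF b m s C k hk x = w,
      (Finset.univ.filter fun x : Fin m → ZMod b => PhiF b m s C k hk x = w).card = 0 := by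
    intro w hw
    rw [Finset.mem_filter] at hw
    rw [Finset.card_eq_zero, Finset.filter_eq_empty_iff]
    intro x _
    exact fun hx => hw.2 ⟨x, hx⟩
  rw [Finset.sum_congr rfl h2, Finset.sum_const, smul_eq_mul, mul_zero, add_zero]
  have h3 : ∀ w ∈ Finset.univ.filter fun w : ((j : Fin s) × Fin (k j)) → ZMod b =>
      ∃ x, PhiF b m s C k hk x = w,
      (Finset.univ.filter fun x : Fin m → ZMod b => PhiF b m s C k hk x = w).card
        = cKer b m s C k hk := by
    intro w hw
    rw [Finset.mem_filter] at hw
    obtain ⟨x0, hx0⟩ := hw.2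
    exact fiber_card b m s C k hk w x0 hx0
  rw [Finset.sum_congr rfl h3, Finset.sum_const, smul_eq_mul]

lemma cKer_dvd (k : Fin s → ℕ) (hk : ∀ j, k j ≤ m) : cKer b m s C k hk ∣ b ^ m :=
  Dvd.intro_left _ (card_decomp b m s C k hk).symm

lemma rng_card_le (k : Fin s → ℕ) (hk : ∀ j, k j ≤ m) :
    (Finset.univ.filter fun w : ((j : Fin s) × Fin (k j)) → ZMod b =>
        ∃ x, PhiF b m s C k hk x = w).card ≤ b ^ (∑ j, k j) := by
  calc (Finset.univ.filter fun w : ((j : Fin s) × Fin (k j)) → ZMod b =>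
        ∃ x, PhiF b m s C k hk x = w).card
      ≤ (Finset.univ : Finset (((j : Fin s) × Fin (k j)) → ZMod b)).card :=
        Finset.card_le_card (Finset.filter_subset _ _)
    _ = b ^ (∑ j, k j) := by
        simp [Fintype.card_fun, ZMod.card, Fintype.card_sigma]

lemma cKer_ge (k : Fin s → ℕ) (hk : ∀ j, k j ≤ m) (hs : ∑ j, k j ≤ m) :
    b ^ (m - ∑ j, k j) ≤ cKer b m s C k hk := by
  have hbpos : 0 < b := (Fact.out : Nat.Prime b).pos
  have h1 := card_decomp b m s C k hk
  have h2 := rng_card_le b m s C k hk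
  have h3 : b ^ m ≤ b ^ (∑ j, k j) * cKer b m s C k hk := by
    calc b ^ m = _ * cKer b m s C k hk := h1
    _ ≤ b ^ (∑ j, k j) * cKer b m s C k hk := Nat.mul_le_mul_right _ h2
  have h4 : b ^ (∑ j, k j) * b ^ (m - ∑ j, k j) = b ^ m := by
    rw [← pow_add]; congr 1; omega
  have h5 : b ^ (∑ j, k j) * b ^ (m - ∑ j, k j) ≤ b ^ (∑ j, k j) * cKer b m s C k hk := by
    omega
  exact Nat.le_of_mul_le_mul_left h5 (by positivity)

lemma cKer_eq_iff_surj (k : Fin s → ℕ) (hk : ∀ j, k j ≤ m) (hs : ∑ j, k j ≤ m) :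
    cKer b m s C k hk = b ^ (m - ∑ j, k j) ↔ Function.Surjective (PhiF b m s C k hk) := by
  have hbpos : 0 < b := (Fact.out : Nat.Prime b).pos
  have h1 := card_decomp b m s C k hk
  have h4 : b ^ (∑ j, k j) * b ^ (m - ∑ j, k j) = b ^ m := by
    rw [← pow_add]; congr 1; omega
  have hWcard : (Finset.univ : Finset (((j : Fin s) × Fin (k j)) → ZMod b)).card
      = b ^ (∑ j, k j) := by
    simp [Fintype.card_fun, ZMod.card, Fintype.card_sigma]
  constructor
  · intro h
    rw [h, ← h4] at h1
    have hrng : (Finset.univ.filter fun w : ((j : Fin s) × Fin (k j)) → ZMod b =>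
        ∃ x, PhiF b m s C k hk x = w).card = b ^ (∑ j, k j) :=
      Nat.eq_of_mul_eq_mul_right (by positivity) h1.symm
    intro w
    have huniv : (Finset.univ.filter fun w : ((j : Fin s) × Fin (k j)) → ZMod b =>
        ∃ x, PhiF b m s C k hk x = w) = Finset.univ := by
      apply Finset.eq_univ_of_card
      rw [hrng]
      simp [Fintype.card_fun, ZMod.card, Fintype.card_sigma]
    have hw := Finset.eq_univ_iff_forall.mp huniv w
    exact (Finset.mem_filter.mp hw).2
  · intro hsurj
    have : (Finset.univ.filter fun w : ((j : Fin s) × Fin (k j)) → ZMod b =>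
        ∃ x, PhiF b m s C k hk x = w) = Finset.univ := by
      apply Finset.filter_true_of_mem
      intro w _
      exact hsurj w
    rw [this, hWcard, ← h4] at h1
    exact (Nat.eq_of_mul_eq_mul_left (by positivity) h1.symm)

lemma cKer_mono (k k' : Fin s → ℕ) (hk : ∀ j, k j ≤ m) (hk' : ∀ j, k' j ≤ m)
    (hle : ∀ j, k' j ≤ k j) :
    cKer b m s C k hk ≤ cKer b m s C k' hk' := by
  apply Finset.card_le_card
  apply Finset.monotone_filter_right
  intro x _ hx
  funext q
  have := congrFun hx ⟨q.1, ⟨(q.2 : ℕ), lt_of_lt_of_le q.2.2 (hle q.1)⟩⟩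
  exact this

lemma Dmap_bijective : Function.Bijective (Dmap b m) := by
  have hb : 2 ≤ b := hb2 b
  rw [Fintype.bijective_iff_injective_and_card]
  constructor
  · intro i i' h
    have hvals : ∀ p : Fin m, (i : ℕ) / b ^ (p : ℕ) % b = (i' : ℕ) / b ^ (p : ℕ) % b := by
      intro p
      have h1 := congrFun h p
      unfold Dmap at h1
      have e1 : (((i : ℕ) / b ^ (p : ℕ) % b : ℕ) : ZMod b).val = (i : ℕ) / b ^ (p : ℕ) % b :=
        ZMod.val_cast_of_lt (Nat.mod_lt _ (by omega))
      have e2 : (((i' : ℕ) / b ^ (p : ℕ) % b : ℕ) : ZMod b).val = (i' : ℕ) / b ^ (p : ℕ) % b :=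
        ZMod.val_cast_of_lt (Nat.mod_lt _ (by omega))
      rw [← e1, ← e2, h1]
    have hsum : ∀ a : ℕ, a < b ^ m →
        ∑ t ∈ Finset.range m, (a / b ^ t % b) * b ^ t = a := by
      intro a ha
      rw [digits_sum b hb m a, Nat.mod_eq_of_lt ha]
    have hi := hsum (i : ℕ) i.2
    have hi' := hsum (i' : ℕ) i'.2
    have : ∑ t ∈ Finset.range m, ((i : ℕ) / b ^ t % b) * b ^ t
        = ∑ t ∈ Finset.range m, ((i' : ℕ) / b ^ t % b) * b ^ t := by
      apply Finset.sum_congr rfl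
      intro t ht
      rw [Finset.mem_range] at ht
      rw [hvals ⟨t, ht⟩]
    apply Fin.ext
    omega
  · simp [Fintype.card_fun, ZMod.card]

/-- the gamma condition is a linear condition on digit vectors -/
lemma gamma_cond_iff (hm : 1 ≤ m) (k : Fin s → ℕ) (l j : Fin (b ^ m)) :
    (∀ r : Fin s, (k r : ℕ∞) ≤ gammaB b (digitalNet b m s C l r) (digitalNet b m s C j r)) ↔
      PhiF b m s C (fun r => min (k r) m) (fun r => min_le_right _ _) (Dmap b m l)
        = PhiF b m s C (fun r => min (k r) m) (fun r => min_le_right _ _) (Dmap b m j) := by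
  have hb : 2 ≤ b := hb2 b
  have main : ∀ r : Fin s,
      ((k r : ℕ∞) ≤ gammaB b (digitalNet b m s C l r) (digitalNet b m s C j r)) ↔
      ∀ t < min (k r) m, coordDig b m s C l r t = coordDig b m s C j r t := by
    intro r
    rw [digitalNet_eq_xval, digitalNet_eq_xval,
      gammaB_le_iff b hb _ _ (coordDig_lt b m s C l r) (coordDig_lt b m s C j r) m hm,
      floor_agree_iff b hb _ _ (coordDig_lt b m s C l r) (coordDig_lt b m s C j r) m]
  rw [forall_congr' main, funext_iff, Sigma.forall]
  constructor
  · intro H r t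
    have h2 : (t : ℕ) < m := lt_of_lt_of_le t.2 (min_le_right _ _)
    have := H r (t : ℕ) t.2
    unfold coordDig at this
    rw [dif_pos h2, dif_pos h2] at this
    exact ZMod.val_injective b this
  · intro H r t ht
    have h2 : t < m := lt_of_lt_of_le ht (min_le_right _ _)
    unfold coordDig
    rw [dif_pos h2, dif_pos h2]
    exact congrArg ZMod.val (H r ⟨t, ht⟩)

/-- membership in an elementary interval is a linear condition on digit vectors -/
lemma mem_interval_iff (k : Fin s → ℕ) (hk : ∀ j, k j ≤ m) (a : Fin s → ℕ)
    (ha : ∀ j, a j < b ^ k j) (i : Fin (b ^ m)) :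
    digitalNet b m s C i ∈ ElemInterval b s k a ↔
      PhiF b m s C k hk (Dmap b m i)
        = fun q => ((a q.1 / b ^ (k q.1 - 1 - (q.2 : ℕ)) % b : ℕ) : ZMod b) := by
  have hb : 2 ≤ b := hb2 b
  have hb0 : (0:ℝ) < b := by positivity
  have main : ∀ r : Fin s,
      ((a r : ℝ) / (b : ℝ) ^ k r ≤ digitalNet b m s C i r ∧
        digitalNet b m s C i r < ((a r : ℝ) + 1) / (b : ℝ) ^ k r) ↔
      ∀ t < k r, coordDig b m s C i r t = a r / b ^ (k r - 1 - t) % b := by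
    intro r
    rw [digitalNet_eq_xval]
    have hfloor : ((a r : ℝ) / (b : ℝ) ^ k r ≤ xval b m (coordDig b m s C i r) ∧
        xval b m (coordDig b m s C i r) < ((a r : ℝ) + 1) / (b : ℝ) ^ k r) ↔
        ⌊(b:ℝ) ^ k r * xval b m (coordDig b m s C i r)⌋ = ((a r : ℕ) : ℤ) := by
      rw [Int.floor_eq_iff, div_le_iff₀ (by positivity), lt_div_iff₀ (by positivity)]
      push_cast
      have hcomm := mul_comm ((b:ℝ) ^ k r) (xval b m (coordDig b m s C i r))
      constructor
      · rintro ⟨u, v⟩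
        exact ⟨by linarith, by linarith⟩
      · rintro ⟨u, v⟩
        exact ⟨by linarith, by linarith⟩
    rw [hfloor, floor_pow_mul_xval b hb _ (coordDig_lt b m s C i r) m (k r) (hk r),
      Int.natCast_inj]
    conv_lhs => rw [← Nval_digits b hb (k r) (a r) (ha r)]
    exact Nval_inj b (k r) hb (coordDig b m s C i r)
      (fun t => a r / b ^ (k r - 1 - t) % b) (coordDig_lt b m s C i r)
      (fun t => Nat.mod_lt _ (by omega))
  have hmem : digitalNet b m s C i ∈ ElemInterval b s k a ↔
      ∀ r : Fin s, ∀ t < k r, coordDig b m s C i r t = a r / b ^ (k r - 1 - t) % b := by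
    unfold ElemInterval
    rw [Set.mem_setOf_eq]
    exact forall_congr' main
  rw [hmem, funext_iff, Sigma.forall]
  constructor
  · intro H r t
    have h2 : (t : ℕ) < m := lt_of_lt_of_le t.2 (hk r)
    have := H r (t : ℕ) t.2
    unfold coordDig at this
    rw [dif_pos h2] at this
    unfold PhiF
    rw [← this]
    rw [ZMod.natCast_val, ZMod.cast_id]
  · intro H r t ht
    have h2 : t < m := lt_of_lt_of_le ht (hk r)
    have := H r ⟨t, ht⟩
    unfold PhiF at this
    unfold coordDig
    rw [dif_pos h2, this, ZMod.val_cast_of_lt (Nat.mod_lt _ (by omega))]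

lemma count_eq_fiber (k : Fin s → ℕ) (hk : ∀ j, k j ≤ m)
    (w : ((j : Fin s) × Fin (k j)) → ZMod b) :
    (Finset.univ.filter fun i : Fin (b ^ m) => PhiF b m s C k hk (Dmap b m i) = w).card
      = (Finset.univ.filter fun x : Fin m → ZMod b => PhiF b m s C k hk x = w).card := by
  apply Finset.card_bij (fun i _ => Dmap b m i)
  · intro i hi
    rw [Finset.mem_filter] at hi ⊢
    exact ⟨Finset.mem_univ _, hi.2⟩
  · intro i _ i' _ h
    exact (Dmap_bijective b m).1 h
  · intro x hx
    obtain ⟨i, rfl⟩ := (Dmap_bijective b m).2 x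
    rw [Finset.mem_filter] at hx
    exact ⟨i, Finset.mem_filter.mpr ⟨Finset.mem_univ _, hx.2⟩, rfl⟩

lemma mB_eq (hm : 1 ≤ m) (k : Fin s → ℕ) (l : Fin (b ^ m)) :
    mB b (digitalNet b m s C) k l
      = cKer b m s C (fun r => min (k r) m) (fun r => min_le_right _ _) - 1 := by
  unfold mB
  have hfe : (Finset.univ.filter fun j : Fin (b ^ m) =>
      j ≠ l ∧ ∀ r : Fin s, (k r : ℕ∞) ≤ gammaB b (digitalNet b m s C l r)
        (digitalNet b m s C j r))
      = (Finset.univ.filter fun j : Fin (b ^ m) =>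
        PhiF b m s C (fun r => min (k r) m) (fun r => min_le_right _ _) (Dmap b m j)
          = PhiF b m s C (fun r => min (k r) m) (fun r => min_le_right _ _) (Dmap b m l)).erase
            l := by
    ext j
    rw [Finset.mem_erase, Finset.mem_filter, Finset.mem_filter]
    constructor
    · rintro ⟨-, hj, hg⟩
      exact ⟨hj, Finset.mem_univ _, ((gamma_cond_iff b m s C hm k l j).mp hg).symm⟩
    · rintro ⟨hj, -, hg⟩
      exact ⟨Finset.mem_univ _, hj, (gamma_cond_iff b m s C hm k l j).mpr hg.symm⟩
  rw [hfe, Finset.card_erase_of_mem (by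
    rw [Finset.mem_filter]; exact ⟨Finset.mem_univ _, rfl⟩)]
  congr 1
  rw [count_eq_fiber]
  exact fiber_card b m s C _ _ _ (Dmap b m l) rfl

lemma MB_eq (hm : 1 ≤ m) (k : Fin s → ℕ) :
    MB b (digitalNet b m s C) k
      = b ^ m * (cKer b m s C (fun r => min (k r) m) (fun r => min_le_right _ _) - 1) := by
  unfold MB
  rw [Finset.sum_congr rfl (fun l _ => mB_eq b m s C hm k l), Finset.sum_const,
    smul_eq_mul, Finset.card_univ, Fintype.card_fin]

lemma equidist_iff (hm : 1 ≤ m) (k : Fin s → ℕ) (hs : ∑ j, k j ≤ m) :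
    kEquidistributed b m (digitalNet b m s C) k ↔
      cKer b m s C k (fun r => le_trans (Finset.single_le_sum
        (fun i _ => Nat.zero_le (k i)) (Finset.mem_univ r)) hs) = b ^ (m - ∑ j, k j) := by
  have hb : 2 ≤ b := hb2 b
  set hk : ∀ j, k j ≤ m := fun r => le_trans (Finset.single_le_sum
        (fun i _ => Nat.zero_le (k i)) (Finset.mem_univ r)) hs with hhk
  have hn : 0 < b ^ m := by positivity
  constructor
  · intro heq
    set i0 : Fin (b ^ m) := ⟨0, hn⟩ with hi0
    set a : Fin s → ℕ := fun r => Nval b (k r) (coordDig b m s C i0 r) with ha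
    have hav : ∀ r, a r < b ^ k r := fun r => Nval_lt b (k r) _ (coordDig_lt b m s C i0 r)
    have hcount := heq a hav
    set w : ((j : Fin s) × Fin (k j)) → ZMod b :=
      fun q => ((a q.1 / b ^ (k q.1 - 1 - (q.2 : ℕ)) % b : ℕ) : ZMod b) with hw
    have hmem : digitalNet b m s C i0 ∈ ElemInterval b s k a := by
      rw [mem_interval_iff b m s C k hk a hav i0]
      funext q
      unfold PhiF
      have h2 : (q.2 : ℕ) < m := lt_of_lt_of_le q.2.2 (hk q.1)
      have hdig : coordDig b m s C i0 q.1 (q.2 : ℕ)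
          = a q.1 / b ^ (k q.1 - 1 - (q.2 : ℕ)) % b := by
        have := (Nval_inj b (k q.1) hb (coordDig b m s C i0 q.1)
          (fun t => a q.1 / b ^ (k q.1 - 1 - t) % b) (coordDig_lt b m s C i0 q.1)
          (fun t => Nat.mod_lt _ (by omega))).mp
          (by rw [Nval_digits b hb (k q.1) (a q.1) (hav q.1)])
        exact this (q.2 : ℕ) q.2.2
      unfold coordDig at hdig
      rw [dif_pos h2] at hdig
      rw [← hdig, ZMod.natCast_val, ZMod.cast_id]
    have hfc : (Finset.univ.filter fun i : Fin (b ^ m) =>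
        digitalNet b m s C i ∈ ElemInterval b s k a).card
        = (Finset.univ.filter fun x : Fin m → ZMod b => PhiF b m s C k hk x = w).card := by
      rw [← count_eq_fiber b m s C k hk w]
      congr 1
      apply Finset.filter_congr
      intro i _
      rw [mem_interval_iff b m s C k hk a hav i]
    have hWne : PhiF b m s C k hk (Dmap b m i0) = w :=
      (mem_interval_iff b m s C k hk a hav i0).mp hmem
    rw [hcount] at hfc
    rw [← fiber_card b m s C k hk w (Dmap b m i0) hWne]
    omega
  · intro hker a hav
    have hsurj := (cKer_eq_iff_surj b m s C k hk hs).mp hker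
    set w : ((j : Fin s) × Fin (k j)) → ZMod b :=
      fun q => ((a q.1 / b ^ (k q.1 - 1 - (q.2 : ℕ)) % b : ℕ) : ZMod b) with hw
    obtain ⟨x0, hx0⟩ := hsurj w
    have hfc : (Finset.univ.filter fun i : Fin (b ^ m) =>
        digitalNet b m s C i ∈ ElemInterval b s k a).card
        = (Finset.univ.filter fun x : Fin m → ZMod b => PhiF b m s C k hk x = w).card := by
      rw [← count_eq_fiber b m s C k hk w]
      congr 1
      apply Finset.filter_congr
      intro i _
      rw [mem_interval_iff b m s C k hk a hav i]
    rw [hfc, fiber_card b m s C k hk w x0 hx0, hker]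

end Net

lemma exists_sub_sum {s : ℕ} (k : Fin s → ℕ) (t : ℕ) (h : t ≤ ∑ j, k j) :
    ∃ k' : Fin s → ℕ, (∀ j, k' j ≤ k j) ∧ ∑ j, k' j = t := by
  suffices H : ∀ d : ℕ, ∀ k : Fin s → ℕ, ∑ j, k j = t + d →
      ∃ k' : Fin s → ℕ, (∀ j, k' j ≤ k j) ∧ ∑ j, k' j = t by
    exact H (∑ j, k j - t) k (by omega)
  intro d
  induction d with
  | zero => intro k hk; exact ⟨k, fun j => le_rfl, by omega⟩
  | succ d ih =>
    intro k hk
    have hpos : ∃ j0, 0 < k j0 := by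
      by_contra hc
      push_neg at hc
      have : ∑ j, k j = 0 := Finset.sum_eq_zero (fun j _ => by have := hc j; omega)
      omega
    obtain ⟨j0, hj0⟩ := hpos
    set k1 : Fin s → ℕ := Function.update k j0 (k j0 - 1) with hk1
    have hsum1 : ∑ j, k1 j = t + d := by
      rw [hk1, Finset.sum_update_of_mem (Finset.mem_univ j0),
        Finset.sdiff_singleton_eq_erase]
      rw [← Finset.add_sum_erase Finset.univ k (Finset.mem_univ j0)] at hk
      omega
    obtain ⟨k', hle, hsum⟩ := ih k1 hsum1
    refine ⟨k', fun j => le_trans (hle j) ?_, hsum⟩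
    rw [hk1]
    rcases eq_or_ne j j0 with rfl | hne
    · rw [Function.update_self]; omega
    · rw [Function.update_of_ne hne]


theorem stmt11 (b m s : ℕ) [Fact (Nat.Prime b)] (hm : 1 ≤ m)
    (C : Fin s → Matrix (Fin m) (Fin m) (ZMod b)) (hC : ∀ ℓ, IsUnit (C ℓ)) :
    (∀ k : Fin s → ℕ, CB b (digitalNet b m s C) k ≤ 1) ↔
      (∀ k : Fin s → ℕ, ∑ j, k j ≤ m → kEquidistributed b m (digitalNet b m s C) k) := by
  classical
  have hb : 2 ≤ b := hb2 b
  have hbm1 : 1 ≤ b ^ m := Nat.one_le_pow _ _ (by omega)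
  have hbm2 : 2 ≤ b ^ m := le_trans hb (by calc b = b ^ 1 := (pow_one b).symm
    _ ≤ b ^ m := Nat.pow_le_pow_right (by omega) hm)
  -- the key numeric reformulation of `CB ≤ 1`
  have key : ∀ k : Fin s → ℕ, (CB b (digitalNet b m s C) k ≤ 1 ↔
      b ^ (∑ j, k j) * (cKer b m s C (fun r => min (k r) m) (fun r => min_le_right _ _) - 1)
        ≤ b ^ m - 1) := by
    intro k
    unfold CB
    rw [MB_eq b m s C hm k]
    set c1 : ℕ := cKer b m s C (fun r => min (k r) m) (fun r => min_le_right _ _) - 1 with hc1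
    have hden : (0:ℝ) < ((b ^ m : ℕ) : ℝ) * (((b ^ m : ℕ) : ℝ) - 1) := by
      have h1 : (2:ℝ) ≤ ((b ^ m : ℕ) : ℝ) := by exact_mod_cast hbm2
      nlinarith
    rw [div_le_one hden]
    have hsub : ((b ^ m : ℕ) : ℝ) - 1 = ((b ^ m - 1 : ℕ) : ℝ) := by
      push_cast [Nat.cast_sub hbm1]
      ring
    rw [hsub]
    have hLHS : (b:ℝ) ^ (∑ j, k j) * ((b ^ m * c1 : ℕ) : ℝ)
        = ((b ^ (∑ j, k j) * (b ^ m * c1) : ℕ) : ℝ) := by push_cast; ring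
    rw [hLHS, ← Nat.cast_mul, Nat.cast_le]
    have hre : b ^ (∑ j, k j) * (b ^ m * c1) = b ^ m * (b ^ (∑ j, k j) * c1) := by ring
    have hre2 : b ^ m * (b ^ m - 1) = b ^ m * (b ^ m - 1) := rfl
    rw [hre]
    constructor
    · intro h
      exact Nat.le_of_mul_le_mul_left h (by positivity)
    · intro h
      exact Nat.mul_le_mul_left _ h
  have cKer_congr : ∀ (k1 k2 : Fin s → ℕ) (h : k1 = k2) (h1 : ∀ j, k1 j ≤ m)
      (h2 : ∀ j, k2 j ≤ m), cKer b m s C k1 h1 = cKer b m s C k2 h2 := by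
    intro k1 k2 h h1 h2
    subst h
    rfl
  constructor
  · intro hCB k hs
    have hk : ∀ j, k j ≤ m := fun r => le_trans (Finset.single_le_sum
      (fun i _ => Nat.zero_le (k i)) (Finset.mem_univ r)) hs
    rw [equidist_iff b m s C hm k hs]
    have hmin : (fun r => min (k r) m) = k := funext fun r => min_eq_left (hk r)
    have h1 := (key k).mp (hCB k)
    rw [cKer_congr _ k hmin _ hk] at h1
    have hge := cKer_ge b m s C k hk hs
    have hdvd := cKer_dvd b m s C k hk
    obtain ⟨e, he, hce⟩ := (Nat.dvd_prime_pow (Fact.out : Nat.Prime b)).mp hdvd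
    show cKer b m s C k hk = b ^ (m - ∑ j, k j)
    rw [hce]
    rw [hce] at hge h1
    have hene : e ≥ m - ∑ j, k j := by
      by_contra hcon
      push_neg at hcon
      exact absurd hge (by
        apply Nat.not_le_of_lt
        exact Nat.pow_lt_pow_right (by omega) hcon)
    rcases Nat.eq_or_lt_of_le hene with heq | hlt
    · rw [← heq]
    · exfalso
      have h2 : b ^ (∑ j, k j) * b ^ (m - ∑ j, k j + 1) ≤ b ^ (∑ j, k j) * b ^ e :=
        Nat.mul_le_mul_left _ (Nat.pow_le_pow_right (by omega) hlt)
      have h3 : b ^ (∑ j, k j) * b ^ (m - ∑ j, k j + 1) = b ^ (m + 1) := by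
        rw [← pow_add]; congr 1; omega
      have h4 : b ^ (m + 1) = b * b ^ m := by rw [pow_succ]; ring
      have h5 : b ^ (∑ j, k j) * (b ^ e - 1) = b ^ (∑ j, k j) * b ^ e - b ^ (∑ j, k j) := by
        rw [Nat.mul_sub, Nat.mul_one]
      have h6 : b ^ (∑ j, k j) ≤ b ^ m := Nat.pow_le_pow_right (by omega) hs
      have h7 : 2 * b ^ m ≤ b * b ^ m := Nat.mul_le_mul_right _ hb
      omega
  · intro heq k
    rw [key k]
    set k' : Fin s → ℕ := fun r => min (k r) m with hk'def
    have hk'le : ∀ r, k' r ≤ m := fun r => min_le_right _ _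
    rcases Nat.lt_or_ge (∑ j, k' j) m with hlt | hge
    · have hkk : ∀ r, k r ≤ m := by
        intro r
        by_contra hcon
        push_neg at hcon
        have h1 : k' r = m := min_eq_right (le_of_lt hcon)
        have h2 : k' r ≤ ∑ j, k' j := Finset.single_le_sum
          (fun i _ => Nat.zero_le (k' i)) (Finset.mem_univ r)
        omega
      have hkeq : k' = k := funext fun r => min_eq_left (hkk r)
      have hsum : ∑ j, k j ≤ m := by
        rw [← hkeq]
        omega
      have hc : cKer b m s C k hkk = b ^ (m - ∑ j, k j) :=
        (equidist_iff b m s C hm k hsum).mp (heq k hsum)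
      have h5 : cKer b m s C (fun r => min (k r) m) (fun r => min_le_right _ _)
          = b ^ (m - ∑ j, k j) := by
        rw [cKer_congr _ k (funext fun r => min_eq_left (hkk r)) _ hkk]
        exact hc
      rw [h5]
      have h1 : b ^ (∑ j, k j) * b ^ (m - ∑ j, k j) = b ^ m := by
        rw [← pow_add]; congr 1; omega
      have h2 : b ^ (∑ j, k j) * (b ^ (m - ∑ j, k j) - 1)
          = b ^ (∑ j, k j) * b ^ (m - ∑ j, k j) - b ^ (∑ j, k j) := by
        rw [Nat.mul_sub, Nat.mul_one]
      have h3 : 1 ≤ b ^ (∑ j, k j) := Nat.one_le_pow _ _ (by omega)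
      omega
    · obtain ⟨k'', hle, hsum⟩ := exists_sub_sum k' m hge
      have hk''le : ∀ r, k'' r ≤ m := fun r => le_trans (hle r) (hk'le r)
      have h1 : cKer b m s C k'' hk''le = 1 := by
        have := (equidist_iff b m s C hm k'' (le_of_eq hsum)).mp (heq k'' (le_of_eq hsum))
        rw [show m - ∑ j, k'' j = 0 by omega, pow_zero] at this
        exact this
      have h2 : cKer b m s C k' hk'le ≤ 1 := h1 ▸ cKer_mono b m s C k' k'' hk'le hk''le hle
      have h3 : 1 ≤ cKer b m s C k' hk'le := cKer_pos b m s C k' hk'le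
      have h4 : cKer b m s C k' hk'le = 1 := le_antisymm h2 h3
      have h5 : cKer b m s C (fun r => min (k r) m) (fun r => min_le_right _ _) = 1 := h4
      rw [h5]
      simp
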